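/- Let a1, …, a5 > 0, b1 = (a1 + a2)/(1 + a4·a5), b2 = a2/(1 + a4·a5), b3 = a5/(1 + a4·a5), g(V) = (2·b3·V − b1)/(1 + a3·V) + b1 − b3·V, and H(V) = b1 − b2·(1 + a3·V)·exp(a3·(V + a4·g(V))) − 2·b3·V, and let V* > 0 satisfy H(V*) = 0. Then H(V) > 0 for every V with 0 < V < V*, and H(V) < 0 for every V > V*. -/

import Mathlib

theorem H_sign_around_mpp
    (a1 a2 a3 a4 a5 b1 b2 b3 : ℝ)
    (ha1 : 0 < a1) (ha2 : 0 < a2) (ha3 : 0 < a3) (ha4 : 0 < a4) (ha5 : 0 < a5)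
    (hb1 : b1 = (a1 + a2) / (1 + a4 * a5))
    (hb2 : b2 = a2 / (1 + a4 * a5))
    (hb3 : b3 = a5 / (1 + a4 * a5))
    (g H : ℝ → ℝ)
    (hg : ∀ V, g V = (2 * b3 * V - b1) / (1 + a3 * V) + b1 - b3 * V)
    (hH : ∀ V, H V = b1 - b2 * (1 + a3 * V) * Real.exp (a3 * (V + a4 * g V)) - 2 * b3 * V)
    (Vstar : ℝ) (hVstar : 0 < Vstar) (hzero : H Vstar = 0) :
    (∀ V : ℝ, 0 < V → V < Vstar → 0 < H V) ∧
    (∀ V : ℝ, Vstar < V → H V < 0) := by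
  have h45 : (0:ℝ) < 1 + a4 * a5 := by positivity
  have hb1p : 0 < b1 := by rw [hb1]; positivity
  have hb2p : 0 < b2 := by rw [hb2]; positivity
  have hb3p : 0 < b3 := by rw [hb3]; positivity
  have hb3lt : a4 * b3 < 1 := by
    rw [hb3, mul_div_assoc']
    rw [div_lt_one h45]; linarith
  have hHfun : H = fun V => b1 - b2 * (1 + a3 * V) *
      Real.exp (a3 * (V + a4 * ((2 * b3 * V - b1) / (1 + a3 * V) + b1 - b3 * V))) - 2 * b3 * V :=
    funext fun V => by rw [hH, hg]
  -- derivative of H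
  have hder : ∀ V : ℝ, 0 ≤ V →
      HasDerivAt H
        (-(b2 * a3 * Real.exp (a3 * (V + a4 * ((2 * b3 * V - b1) / (1 + a3 * V) + b1 - b3 * V)))
          + b2 * (1 + a3 * V) *
            Real.exp (a3 * (V + a4 * ((2 * b3 * V - b1) / (1 + a3 * V) + b1 - b3 * V))) *
            (a3 * (1 - a4 * b3 + a4 * (2 * b3 + a3 * b1) / (1 + a3 * V) ^ 2)))
          - 2 * b3) V := by
    intro V hV
    have hVd : (0:ℝ) < 1 + a3 * V := by nlinarith
    have hq : HasDerivAt (fun V : ℝ => (2 * b3 * V - b1) / (1 + a3 * V))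
        ((2 * b3 * (1 + a3 * V) - (2 * b3 * V - b1) * a3) / (1 + a3 * V) ^ 2) V := by
      have hnum : HasDerivAt (fun V : ℝ => 2 * b3 * V - b1) (2 * b3) V := by
        simpa using ((hasDerivAt_id V).const_mul (2 * b3)).sub_const b1
      have hden : HasDerivAt (fun V : ℝ => 1 + a3 * V) a3 V := by
        simpa using ((hasDerivAt_id V).const_mul a3).const_add 1
      exact hnum.div hden (ne_of_gt hVd)
    have hgd : HasDerivAt (fun V : ℝ => (2 * b3 * V - b1) / (1 + a3 * V) + b1 - b3 * V)
        ((2 * b3 * (1 + a3 * V) - (2 * b3 * V - b1) * a3) / (1 + a3 * V) ^ 2 - b3) V := by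
      exact ((hq.add_const b1).sub ((hasDerivAt_id V).const_mul b3)).congr_deriv (by ring)
    have hφ : HasDerivAt (fun V : ℝ => a3 * (V + a4 * ((2 * b3 * V - b1) / (1 + a3 * V) + b1 - b3 * V)))
        (a3 * (1 + a4 * ((2 * b3 * (1 + a3 * V) - (2 * b3 * V - b1) * a3) / (1 + a3 * V) ^ 2 - b3))) V := by
      simpa using ((hasDerivAt_id V).add (hgd.const_mul a4)).const_mul a3
    have hexp := hφ.exp
    have hlin : HasDerivAt (fun V : ℝ => b2 * (1 + a3 * V)) (b2 * a3) V := by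
      simpa using (((hasDerivAt_id V).const_mul a3).const_add 1).const_mul b2
    have hE := hlin.mul hexp
    have hlin2 : HasDerivAt (fun V : ℝ => 2 * b3 * V) (2 * b3) V := by
      simpa using (hasDerivAt_id V).const_mul (2 * b3)
    have hHd := ((hasDerivAt_const V b1).sub hE).sub hlin2
    rw [hHfun]
    convert hHd using 1
    have h2 : (1 + a3 * V) ^ 2 ≠ 0 := by positivity
    case e'_4 => rfl
    case e'_5 => rfl
    case e'_8 => rfl
    ring
  -- H is strictly decreasing on [0, ∞)
  have hanti : StrictAntiOn H (Set.Ici 0) := by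
    apply strictAntiOn_of_deriv_neg (convex_Ici 0)
    · exact fun x hx => (hder x hx).continuousAt.continuousWithinAt
    · intro x hx
      rw [interior_Ici, Set.mem_Ioi] at hx
      rw [(hder x (le_of_lt hx)).deriv]
      have hVd : (0:ℝ) < 1 + a3 * x := by nlinarith
      have he : 0 < Real.exp (a3 * (x + a4 * ((2 * b3 * x - b1) / (1 + a3 * x) + b1 - b3 * x))) :=
        Real.exp_pos _
      have h1 : 0 < b2 * a3 * Real.exp (a3 * (x + a4 * ((2 * b3 * x - b1) / (1 + a3 * x) + b1 - b3 * x))) := by positivity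
      have h2 : 0 < a3 * (1 - a4 * b3 + a4 * (2 * b3 + a3 * b1) / (1 + a3 * x) ^ 2) := by
        have : 0 < a4 * (2 * b3 + a3 * b1) / (1 + a3 * x) ^ 2 := by positivity
        have : 0 < 1 - a4 * b3 + a4 * (2 * b3 + a3 * b1) / (1 + a3 * x) ^ 2 := by linarith
        positivity
      have h3 : 0 < b2 * (1 + a3 * x) *
          Real.exp (a3 * (x + a4 * ((2 * b3 * x - b1) / (1 + a3 * x) + b1 - b3 * x))) *
          (a3 * (1 - a4 * b3 + a4 * (2 * b3 + a3 * b1) / (1 + a3 * x) ^ 2)) := by positivity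
      nlinarith [hb3p]
  constructor
  · intro V hV0 hVlt
    have := hanti (le_of_lt hV0) (le_of_lt hVstar) hVlt
    linarith [hzero ▸ this]
  · intro V hVgt
    have := hanti (le_of_lt hVstar) (le_of_lt (lt_trans hVstar hVgt)) hVgt
    linarith [hzero ▸ this]
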